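/- Let n ≥ 1, let ω = e^{2πi/3}, let (h_{i,j}, v_{i,j}, d_{i,j})_{1≤i,j≤n} be an Alternating Phase Matrix of type 4, and set a_{i,j} := −ω·h_{i,j} + ω²·v_{i,j}. Then: (a) for every row i, Σ_{j=1}^{n} a_{i,j} ∈ ω²·ℤ; (b) for every column j, Σ_{i=1}^{n} a_{i,j} ∈ ω·ℤ; (c) for every diagonal ℓ ∈ [1−n, n−1], Σ_{i=Max(1,1−ℓ)}^{Min(n,n−ℓ)} a_{i,i+ℓ} ∈ ℤ. -/

import Mathlib

namespace APM

/-- `AltOn s f a b`: reading the values `f j` for `j ∈ s` in increasing order,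
the nonzero values strictly alternate in sign, the first one being `a` and the
last one being `b` (vacuously true if all values on `s` are zero). -/
def AltOn (s : Finset ℤ) (f : ℤ → ℤ) (a b : ℤ) : Prop :=
  (∀ j₁ ∈ s, ∀ j₂ ∈ s, j₁ < j₂ → f j₁ ≠ 0 → f j₂ ≠ 0 →
    (∀ j ∈ s, j₁ < j → j < j₂ → f j = 0) → f j₂ = -f j₁) ∧
  (∀ j₀ ∈ s, f j₀ ≠ 0 → (∀ j ∈ s, j < j₀ → f j = 0) → f j₀ = a) ∧
  (∀ j₀ ∈ s, f j₀ ≠ 0 → (∀ j ∈ s, j₀ < j → f j = 0) → f j₀ = b)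

/-- An APM datum: entries `(h,v,d) ∈ {-1,0,1}³` with `h + v + d = 0` on the
grid `[1,n] × [1,n]`. -/
def IsAPMDatum (n : ℕ) (h v d : ℤ → ℤ → ℤ) : Prop :=
  ∀ i ∈ Finset.Icc (1 : ℤ) n, ∀ j ∈ Finset.Icc (1 : ℤ) n,
    h i j ∈ ({-1, 0, 1} : Set ℤ) ∧ v i j ∈ ({-1, 0, 1} : Set ℤ) ∧
    d i j ∈ ({-1, 0, 1} : Set ℤ) ∧ h i j + v i j + d i j = 0

/-- Conditions (1), (2), (3) common to APM of types 1, 2, 3. -/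
def APMCommon (n : ℕ) (h v : ℤ → ℤ → ℤ) : Prop :=
  (∀ i ∈ Finset.Icc (1 : ℤ) n, ∃ j ∈ Finset.Icc (1 : ℤ) n, h i j ≠ 0) ∧
  (∀ j ∈ Finset.Icc (1 : ℤ) n, ∃ i ∈ Finset.Icc (1 : ℤ) n, v i j ≠ 0) ∧
  (∀ i ∈ Finset.Icc (1 : ℤ) n, AltOn (Finset.Icc 1 n) (fun j => h i j) 1 1) ∧
  (∀ j ∈ Finset.Icc (1 : ℤ) n, AltOn (Finset.Icc 1 n) (fun i => v i j) (-1) (-1))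

/-- Row indices of the diagonal `{(i, i+ℓ)}` of the `[1,n]²` grid. -/
noncomputable def diagSet (n : ℕ) (ℓ : ℤ) : Finset ℤ :=
  Finset.Icc (max 1 (1 - ℓ)) (min (n : ℤ) ((n : ℤ) - ℓ))

/-- Type-1 diagonal alternation conditions. -/
def APMDiag1 (n : ℕ) (d : ℤ → ℤ → ℤ) : Prop :=
  ∀ ℓ ∈ Finset.Icc (1 - (n : ℤ)) ((n : ℤ) - 1),
    (0 < ℓ → AltOn (diagSet n ℓ) (fun i => d i (i + ℓ)) (-1) 1) ∧
    (ℓ ≤ 0 → AltOn (diagSet n ℓ) (fun i => d i (i + ℓ)) 1 (-1))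

/-- Type-2 diagonal alternation conditions. -/
def APMDiag2 (n : ℕ) (d : ℤ → ℤ → ℤ) : Prop :=
  ∀ ℓ ∈ Finset.Icc (1 - (n : ℤ)) ((n : ℤ) - 1),
    (0 ≤ ℓ → AltOn (diagSet n ℓ) (fun i => d i (i + ℓ)) (-1) 1) ∧
    (ℓ < 0 → AltOn (diagSet n ℓ) (fun i => d i (i + ℓ)) 1 (-1))

/-- Type-3 diagonal alternation conditions. -/
def APMDiag3 (n : ℕ) (d : ℤ → ℤ → ℤ) : Prop :=
  ∀ ℓ ∈ Finset.Icc (1 - (n : ℤ)) ((n : ℤ) - 1),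
    AltOn (diagSet n ℓ) (fun i => d i (i + ℓ)) (-1) 1

/-- Alternating Phase Matrix of type 4. -/
def APMType4 (n : ℕ) (h v d : ℤ → ℤ → ℤ) : Prop :=
  IsAPMDatum n h v d ∧
  (∀ i ∈ Finset.Icc (1 : ℤ) n, AltOn (Finset.Icc 1 n) (fun j => h i j) 1 (-1)) ∧
  (∀ j ∈ Finset.Icc (1 : ℤ) n, AltOn (Finset.Icc 1 n) (fun i => v i j) 1 (-1)) ∧
  APMDiag3 n d

/-- `ω = e^{2πi/3}`. -/
noncomputable def ω : ℂ := Complex.exp (2 * Real.pi * Complex.I / 3)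

/-- The complex APM entry `a_{i,j} = -ω h_{i,j} + ω² v_{i,j}`. -/
noncomputable def apmEntry (h v : ℤ → ℤ → ℤ) (i j : ℤ) : ℂ :=
  -ω * (h i j : ℂ) + ω ^ 2 * (v i j : ℂ)

end APM

namespace APM


/-- If the nonzero values of `f` on `s` alternate from `a` to `-a`, they cancel in pairs. -/
theorem altOn_sum_zero (f : ℤ → ℤ) (a b : ℤ) (hb : b = -a) :
    ∀ s : Finset ℤ, AltOn s f a b → ∑ j ∈ s, f j = 0 := by
  subst hb
  intro s
  induction s using Finset.strongInduction with
  | _ s ih =>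
    rintro ⟨h1, h2, h3⟩
    by_cases hne : ∀ j ∈ s, f j = 0
    · exact Finset.sum_eq_zero hne
    push_neg at hne
    set t := s.filter (fun j => f j ≠ 0) with ht
    have htne : t.Nonempty := by
      obtain ⟨j, hj, hfj⟩ := hne
      exact ⟨j, Finset.mem_filter.mpr ⟨hj, hfj⟩⟩
    set j₁ := t.min' htne with hj₁def
    have hj₁t : j₁ ∈ t := t.min'_mem htne
    have hj₁s : j₁ ∈ s := (Finset.mem_filter.mp hj₁t).1
    have hfj₁ : f j₁ ≠ 0 := (Finset.mem_filter.mp hj₁t).2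
    have hfirst : f j₁ = a := by
      apply h2 j₁ hj₁s hfj₁
      intro j hj hjlt
      by_contra hfj
      have : j₁ ≤ j := t.min'_le j (Finset.mem_filter.mpr ⟨hj, hfj⟩)
      omega
    have ht'ne : (t.erase j₁).Nonempty := by
      by_contra hempty
      have hlast : f j₁ = -a := by
        apply h3 j₁ hj₁s hfj₁
        intro j hj hjgt
        by_contra hfj
        exact hempty ⟨j, Finset.mem_erase.mpr ⟨by omega, Finset.mem_filter.mpr ⟨hj, hfj⟩⟩⟩
      omega
    set j₂ := (t.erase j₁).min' ht'ne with hj₂def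
    have hj₂t : j₂ ∈ t.erase j₁ := (t.erase j₁).min'_mem ht'ne
    have hj₂s : j₂ ∈ s := (Finset.mem_filter.mp (Finset.mem_erase.mp hj₂t).2).1
    have hfj₂ : f j₂ ≠ 0 := (Finset.mem_filter.mp (Finset.mem_erase.mp hj₂t).2).2
    have hj₁lt : j₁ < j₂ := by
      have h₁ : j₁ ≤ j₂ := t.min'_le j₂ (Finset.mem_erase.mp hj₂t).2
      have h₂ : j₂ ≠ j₁ := (Finset.mem_erase.mp hj₂t).1
      omega
    have hkey : ∀ j ∈ s, f j ≠ 0 → j = j₁ ∨ j₂ ≤ j := by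
      intro j hj hfj
      have hjt : j ∈ t := Finset.mem_filter.mpr ⟨hj, hfj⟩
      by_cases h : j = j₁
      · exact Or.inl h
      · exact Or.inr ((t.erase j₁).min'_le j (Finset.mem_erase.mpr ⟨h, hjt⟩))
    have hsecond : f j₂ = -a := by
      have heq : f j₂ = -f j₁ := by
        apply h1 j₁ hj₁s j₂ hj₂s hj₁lt hfj₁ hfj₂
        intro j hj hlt hgt
        by_contra hfj
        rcases hkey j hj hfj with h | h <;> omega
      rw [heq, hfirst]
    set s' := (s.erase j₁).erase j₂ with hs'
    have hmem' : ∀ j, j ∈ s' ↔ j ∈ s ∧ j ≠ j₁ ∧ j ≠ j₂ := by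
      intro j; simp only [hs', Finset.mem_erase]; tauto
    have hgt2 : ∀ j ∈ s', f j ≠ 0 → j₂ < j := by
      intro j hj hfj
      rw [hmem' j] at hj
      rcases hkey j hj.1 hfj with h | h
      · exact absurd h hj.2.1
      · have := hj.2.2; omega
    have hAlt' : AltOn s' f a (-a) := by
      refine ⟨?_, ?_, ?_⟩
      · intro k₁ hk₁ k₂ hk₂ hlt hf₁ hf₂ hbet
        apply h1 k₁ ((hmem' k₁).mp hk₁).1 k₂ ((hmem' k₂).mp hk₂).1 hlt hf₁ hf₂
        intro j hj hl hg
        by_contra hfj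
        have hk₁gt := hgt2 k₁ hk₁ hf₁
        have : j ∈ s' := (hmem' j).mpr ⟨hj, by omega, by omega⟩
        exact hfj (hbet j this hl hg)
      · intro j₀ hj₀ hf₀ hbefore
        have hj₂lt := hgt2 j₀ hj₀ hf₀
        have heq : f j₀ = -f j₂ := by
          apply h1 j₂ hj₂s j₀ ((hmem' j₀).mp hj₀).1 hj₂lt hfj₂ hf₀
          intro j hj hl hg
          by_contra hfj
          have : j ∈ s' := (hmem' j).mpr ⟨hj, by omega, by omega⟩
          exact hfj (hbefore j this hg)
        rw [heq, hsecond]; ring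
      · intro j₀ hj₀ hf₀ hafter
        have hj₂lt := hgt2 j₀ hj₀ hf₀
        apply h3 j₀ ((hmem' j₀).mp hj₀).1 hf₀
        intro j hj hl
        by_contra hfj
        have : j ∈ s' := (hmem' j).mpr ⟨hj, by omega, by omega⟩
        exact hfj (hafter j this hl)
    have hj₂s1 : j₂ ∈ s.erase j₁ := Finset.mem_erase.mpr ⟨by omega, hj₂s⟩
    have hsub : s' ⊂ s :=
      lt_of_le_of_lt (le_of_eq rfl)
        (lt_of_le_of_lt (Finset.erase_subset _ _) (Finset.erase_ssubset hj₁s))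
    have hsum' := ih s' hsub hAlt'
    have hsplit : ∑ j ∈ s, f j = f j₁ + (f j₂ + ∑ j ∈ s', f j) := by
      rw [hs', Finset.add_sum_erase _ _ hj₂s1, Finset.add_sum_erase _ _ hj₁s]
    rw [hsplit, hsum', hfirst, hsecond]; ring

lemma omega_sq : ω ^ 2 = -1 - ω := by
  have hp : IsPrimitiveRoot ω 3 := by
    have := Complex.isPrimitiveRoot_exp 3 (by norm_num)
    simpa [ω] using this
  have h3 : ω ^ 3 = 1 := hp.pow_eq_one
  have hne : ω ≠ 1 := hp.ne_one (by norm_num)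
  have hfac : (ω - 1) * (ω ^ 2 + ω + 1) = 0 := by linear_combination h3
  rcases mul_eq_zero.mp hfac with h | h
  · exact absurd (sub_eq_zero.mp h) hne
  · linear_combination h

/-- Refined sum rules for type-4 Alternating Phase Matrices:
row sums lie in `ω²·ℤ`, column sums in `ω·ℤ`, diagonal sums in `ℤ`. -/
theorem apm_type4_refined_sum_rules (n : ℕ) (hn : 1 ≤ n) (h v d : ℤ → ℤ → ℤ)
    (htype : APMType4 n h v d) :
    (∀ i ∈ Finset.Icc (1 : ℤ) n, ∃ m : ℤ,
      ∑ j ∈ Finset.Icc (1 : ℤ) n, apmEntry h v i j = ω ^ 2 * m) ∧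
    (∀ j ∈ Finset.Icc (1 : ℤ) n, ∃ m : ℤ,
      ∑ i ∈ Finset.Icc (1 : ℤ) n, apmEntry h v i j = ω * m) ∧
    (∀ ℓ ∈ Finset.Icc (1 - (n : ℤ)) ((n : ℤ) - 1), ∃ m : ℤ,
      ∑ i ∈ diagSet n ℓ, apmEntry h v i (i + ℓ) = (m : ℂ)) := by
  obtain ⟨hdatum, hrow, hcol, hdiag⟩ := htype
  refine ⟨?_, ?_, ?_⟩
  · intro i hi
    refine ⟨∑ j ∈ Finset.Icc (1 : ℤ) n, v i j, ?_⟩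
    have hh : ∑ j ∈ Finset.Icc (1 : ℤ) (n : ℤ), h i j = 0 :=
      altOn_sum_zero (fun j => h i j) 1 (-1) (by ring) _ (hrow i hi)
    have hS : ∑ j ∈ Finset.Icc (1 : ℤ) (n : ℤ), apmEntry h v i j
        = -ω * ((∑ j ∈ Finset.Icc (1 : ℤ) (n : ℤ), h i j : ℤ) : ℂ)
          + ω ^ 2 * ((∑ j ∈ Finset.Icc (1 : ℤ) (n : ℤ), v i j : ℤ) : ℂ) := by
      push_cast
      rw [Finset.mul_sum, Finset.mul_sum, ← Finset.sum_add_distrib]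
      rfl
    rw [hS, hh]
    push_cast
    ring
  · intro j hj
    refine ⟨-∑ i ∈ Finset.Icc (1 : ℤ) n, h i j, ?_⟩
    have hv : ∑ i ∈ Finset.Icc (1 : ℤ) (n : ℤ), v i j = 0 :=
      altOn_sum_zero (fun i => v i j) 1 (-1) (by ring) _ (hcol j hj)
    have hS : ∑ i ∈ Finset.Icc (1 : ℤ) (n : ℤ), apmEntry h v i j
        = -ω * ((∑ i ∈ Finset.Icc (1 : ℤ) (n : ℤ), h i j : ℤ) : ℂ)
          + ω ^ 2 * ((∑ i ∈ Finset.Icc (1 : ℤ) (n : ℤ), v i j : ℤ) : ℂ) := by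
      push_cast
      rw [Finset.mul_sum, Finset.mul_sum, ← Finset.sum_add_distrib]
      rfl
    rw [hS, hv]
    push_cast
    ring
  · intro ℓ hℓ
    refine ⟨-∑ i ∈ diagSet n ℓ, v i (i + ℓ), ?_⟩
    have hd0 : ∑ i ∈ diagSet n ℓ, d i (i + ℓ) = 0 :=
      altOn_sum_zero (fun i => d i (i + ℓ)) (-1) 1 (by ring) _ (hdiag ℓ hℓ)
    have hterm : ∀ i ∈ diagSet n ℓ, apmEntry h v i (i + ℓ)
        = -(v i (i + ℓ) : ℂ) + ω * (d i (i + ℓ) : ℂ) := by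
      intro i hi
      have hi' : max 1 (1 - ℓ) ≤ i ∧ i ≤ min (n : ℤ) ((n : ℤ) - ℓ) := by
        simpa [diagSet, Finset.mem_Icc] using hi
      have hmax := max_le_iff.mp hi'.1
      have hmin := le_min_iff.mp hi'.2
      have hi1 : i ∈ Finset.Icc (1 : ℤ) (n : ℤ) := Finset.mem_Icc.mpr ⟨by omega, by omega⟩
      have hi2 : i + ℓ ∈ Finset.Icc (1 : ℤ) (n : ℤ) := Finset.mem_Icc.mpr ⟨by omega, by omega⟩
      obtain ⟨-, -, -, hsum⟩ := hdatum i hi1 (i + ℓ) hi2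
      have hc : (h i (i + ℓ) : ℂ) + (v i (i + ℓ) : ℂ) + (d i (i + ℓ) : ℂ) = 0 := by
        exact_mod_cast congrArg (fun z : ℤ => (z : ℂ)) hsum
      simp only [apmEntry]
      linear_combination (v i (i + ℓ) : ℂ) * omega_sq - ω * hc
    have hS : ∑ i ∈ diagSet n ℓ, apmEntry h v i (i + ℓ)
        = -((∑ i ∈ diagSet n ℓ, v i (i + ℓ) : ℤ) : ℂ)
          + ω * ((∑ i ∈ diagSet n ℓ, d i (i + ℓ) : ℤ) : ℂ) := by
      rw [Finset.sum_congr rfl hterm]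
      push_cast
      rw [Finset.sum_add_distrib, Finset.sum_neg_distrib, Finset.mul_sum]
    rw [hS, hd0]
    push_cast
    ring


end APM
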